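/- A partial order on a set P that is super-Artinian (i.e., Artinian, and whenever p,q ∈ P are incomparable the sets of elements below p and below q coincide, and likewise the sets above them) arises exactly from a norm function: there exist a well-ordered set P₀ and a map N : P → P₀ such that p < q if and only if N(p) < N(q). -/

import Mathlib

/-- A partial order on a set `P` is super-Artinian (Artinian, and incomparable
elements have identical lower sets and identical upper sets) if and only if it arises from a
norm function `N : P → P₀` into a well-ordered set `P₀`, i.e. `p < q ↔ N p < N q`. -/
theorem stmt_0 {P : Type} (lt : P → P → Prop)
    (hirr : ∀ p, ¬ lt p p) (htrans : Transitive lt) :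
    ((¬ ∃ f : ℕ → P, ∀ k, lt (f (k + 1)) (f k)) ∧
      (∀ p q : P, ¬ lt p q → ¬ lt q p →
        ((∀ r, lt r p ↔ lt r q) ∧ (∀ r, lt p r ↔ lt q r)))) ↔
    (∃ (P₀ : Type) (_ : LinearOrder P₀),
      WellFounded ((· < ·) : P₀ → P₀ → Prop) ∧
      ∃ N : P → P₀, ∀ p q, lt p q ↔ N p < N q) := by
  classical
  constructor
  · rintro ⟨hart, hsup⟩
    have hasym : ∀ {p q : P}, lt p q → ¬ lt q p := fun h h' => hirr _ (htrans h h')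
    have equiv_trans : ∀ {p q r : P}, (¬ lt p q ∧ ¬ lt q p) → (¬ lt q r ∧ ¬ lt r q) →
        (¬ lt p r ∧ ¬ lt r p) := by
      rintro p q r ⟨h1, h2⟩ ⟨h3, h4⟩
      have hpq := hsup p q h1 h2
      exact ⟨fun h => h3 ((hpq.2 r).mp h), fun h => h4 ((hpq.1 r).mp h)⟩
    let S : Setoid P := ⟨fun p q => ¬ lt p q ∧ ¬ lt q p,
      ⟨fun p => ⟨hirr p, hirr p⟩, fun h => ⟨h.2, h.1⟩, fun h1 h2 => equiv_trans h1 h2⟩⟩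
    let P₀ := Quotient S
    have hwd : ∀ (a b c d : P), S.r a c → S.r b d → lt a b = lt c d := by
      intro a b c d hac hbd
      have h1 := hsup a c hac.1 hac.2
      have h2 := hsup b d hbd.1 hbd.2
      simp only [eq_iff_iff]
      exact ⟨fun h => (h2.1 c).mp ((h1.2 b).mp h), fun h => (h1.2 b).mpr ((h2.1 c).mpr h)⟩
    let lt₀ : P₀ → P₀ → Prop := Quotient.lift₂ lt hwd
    have hmk : ∀ p q : P, lt₀ ⟦p⟧ ⟦q⟧ ↔ lt p q := fun _ _ => Iff.rfl
    have lt₀_trans : ∀ {a b c : P₀}, lt₀ a b → lt₀ b c → lt₀ a c := by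
      intro a b c
      induction a using Quotient.inductionOn
      induction b using Quotient.inductionOn
      induction c using Quotient.inductionOn
      exact fun h h' => htrans h h'
    have lt₀_asym : ∀ {a b : P₀}, lt₀ a b → ¬ lt₀ b a := by
      intro a b
      induction a using Quotient.inductionOn
      induction b using Quotient.inductionOn
      exact fun h h' => hasym h h'
    have lt₀_tri : ∀ a b : P₀, lt₀ a b ∨ a = b ∨ lt₀ b a := by
      intro a b
      induction a using Quotient.inductionOn with | _ p =>
      induction b using Quotient.inductionOn with | _ q =>
      by_cases h1 : lt p q
      · exact Or.inl h1
      by_cases h2 : lt q p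
      · exact Or.inr (Or.inr h2)
      · exact Or.inr (Or.inl (Quotient.sound ⟨h1, h2⟩))
    letI : LinearOrder P₀ :=
      { lt := lt₀
        le := fun a b => lt₀ a b ∨ a = b
        le_refl := fun a => Or.inr rfl
        le_trans := by
          rintro a b c (h | rfl) (h' | rfl)
          · exact Or.inl (lt₀_trans h h')
          · exact Or.inl h
          · exact Or.inl h'
          · exact Or.inr rfl
        lt_iff_le_not_ge := by
          intro a b
          constructor
          · intro h
            refine ⟨Or.inl h, ?_⟩
            rintro (h' | rfl)
            · exact lt₀_asym h h'
            · exact lt₀_asym h h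
          · rintro ⟨h | rfl, h'⟩
            · exact h
            · exact absurd (Or.inr rfl) h'
        le_antisymm := by
          rintro a b (h | rfl) (h' | h'')
          · exact absurd h' (lt₀_asym h)
          · exact h''.symm
          · rfl
          · rfl
        le_total := by
          intro a b
          rcases lt₀_tri a b with h | h | h
          · exact Or.inl (Or.inl h)
          · exact Or.inl (Or.inr h)
          · exact Or.inr (Or.inl h)
        toDecidableLE := fun a b => Classical.propDecidable _ }
    refine ⟨P₀, inferInstance, ?_, fun p => ⟦p⟧, fun p q => Iff.rfl⟩
    rw [RelEmbedding.wellFounded_iff_isEmpty]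
    constructor
    intro f
    refine hart ⟨fun n => (f n).out, fun k => ?_⟩
    have : lt₀ (f (k + 1)) (f k) := f.map_rel_iff.mpr (Nat.lt_succ_self k)
    rw [← Quotient.out_eq (f (k + 1)), ← Quotient.out_eq (f k)] at this
    exact this
  · rintro ⟨P₀, _, hwf, N, hN⟩
    constructor
    · rintro ⟨f, hf⟩
      obtain ⟨m, ⟨k, rfl⟩, hmin⟩ := hwf.has_min (Set.range (fun n => N (f n)))
        ⟨N (f 0), 0, rfl⟩
      exact hmin (N (f (k + 1))) ⟨k + 1, rfl⟩ ((hN _ _).mp (hf k))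
    · intro p q hpq hqp
      have hNq : ¬ N p < N q := fun h => hpq ((hN p q).mpr h)
      have hNp : ¬ N q < N p := fun h => hqp ((hN q p).mpr h)
      have hEq : N p = N q := le_antisymm (not_lt.mp hNp) (not_lt.mp hNq)
      exact ⟨fun r => by rw [hN, hN, hEq], fun r => by rw [hN, hN, hEq]⟩
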